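/- arXiv:2210.05379 — 2 statements merged into one kernel-verified Lean document; each statement's English description precedes it below -/
import Mathlib

section
/- Let x̄ ∈ ℝⁿ, let s < n, and let S ⊆ {1,…,n} be an index set with |S| = s containing indices of s largest components of x̄ in absolute value, i.e., |x̄_i| ≥ |x̄_j| for all i ∈ S and j ∉ S. Define x̂ ∈ ℝⁿ by x̂_i = x̄_i for i ∈ S and x̂_i = 0 otherwise. Then x̂ is a Euclidean projection of x̄ onto the sparsity set D = {x ∈ ℝⁿ : ‖x‖₀ ≤ s}; i.e., ‖x̂‖₀ ≤ s and ‖x̂ − x̄‖ ≤ ‖z − x̄‖ for every z ∈ ℝⁿ with ‖z‖₀ ≤ s. -/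
noncomputable section

/-- keeping the `s` largest components (in absolute value) of `x̄` and
setting the remaining ones to zero yields a Euclidean projection of `x̄` onto the
sparsity set `D = {x : ‖x‖₀ ≤ s}`. -/
theorem hard_thresholding_is_sparse_projection
    {n : ℕ} (s : ℕ) (hs : s < n)
    (xbar : EuclideanSpace ℝ (Fin n))
    (S : Finset (Fin n)) (hcard : S.card = s)
    (hlargest : ∀ i ∈ S, ∀ j ∉ S, |xbar j| ≤ |xbar i|)
    (xhat : EuclideanSpace ℝ (Fin n))
    (hxhat : ∀ i, xhat i = if i ∈ S then xbar i else 0) :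
    (Finset.univ.filter fun i => xhat i ≠ 0).card ≤ s ∧
      ∀ z : EuclideanSpace ℝ (Fin n),
        (Finset.univ.filter fun i => z i ≠ 0).card ≤ s → ‖xhat - xbar‖ ≤ ‖z - xbar‖ := by
  constructor
  · calc (Finset.univ.filter fun i => xhat i ≠ 0).card ≤ S.card := by
          apply Finset.card_le_card
          intro i hi
          simp only [Finset.mem_filter] at hi
          by_contra h
          exact hi.2 (by rw [hxhat]; simp [h])
      _ = s := hcard
  · intro z hz
    set T := Finset.univ.filter fun i => z i ≠ 0 with hT
    have hzT : ∀ i ∉ T, z i = 0 := by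
      intro i hi
      by_contra h
      exact hi (by simp [hT, h])
    -- card comparison
    have hc : (T \ S).card ≤ (S \ T).card := by
      have h1 := Finset.card_sdiff_add_card_inter T S
      have h2 := Finset.card_sdiff_add_card_inter S T
      have h3 : (T ∩ S).card = (S ∩ T).card := by rw [Finset.inter_comm]
      have h4 : T.card ≤ S.card := by rw [hcard]; exact hz
      omega
    -- key sum inequality
    have key2 : ∑ i ∈ T \ S, (xbar i)^2 ≤ ∑ i ∈ S \ T, (xbar i)^2 := by
      rcases Finset.eq_empty_or_nonempty (S \ T) with he | hne
      · have : (T \ S).card = 0 := by rw [he] at hc; simpa using hc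
        rw [Finset.card_eq_zero] at this
        rw [this, he]
      · obtain ⟨j0, hj0, hmin⟩ := Finset.exists_min_image (S \ T) (fun i => (xbar i)^2) hne
        have hj0S : j0 ∈ S := (Finset.mem_sdiff.mp hj0).1
        calc ∑ i ∈ T \ S, (xbar i)^2 ≤ (T \ S).card • (xbar j0)^2 := by
              apply Finset.sum_le_card_nsmul
              intro i hi
              have hiS : i ∉ S := (Finset.mem_sdiff.mp hi).2
              have := hlargest j0 hj0S i hiS
              calc (xbar i)^2 = |xbar i|^2 := (sq_abs _).symm
                _ ≤ |xbar j0|^2 := pow_le_pow_left₀ (abs_nonneg _) this 2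
                _ = (xbar j0)^2 := sq_abs _
          _ ≤ (S \ T).card • (xbar j0)^2 := by
              rw [nsmul_eq_mul, nsmul_eq_mul]
              exact mul_le_mul_of_nonneg_right (by exact_mod_cast hc) (sq_nonneg _)
          _ ≤ ∑ i ∈ S \ T, (xbar i)^2 := Finset.card_nsmul_le_sum _ _ _ hmin
    have key : ∑ i ∈ Sᶜ, (xbar i)^2 ≤ ∑ i ∈ Tᶜ, (xbar i)^2 := by
      have hS : Sᶜ = (Sᶜ ∩ Tᶜ) ∪ (T \ S) := by
        ext i; simp only [Finset.mem_compl, Finset.mem_union, Finset.mem_inter,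
          Finset.mem_sdiff]; tauto
      have hTc : Tᶜ = (Sᶜ ∩ Tᶜ) ∪ (S \ T) := by
        ext i; simp only [Finset.mem_compl, Finset.mem_union, Finset.mem_inter,
          Finset.mem_sdiff]; tauto
      have d1 : Disjoint (Sᶜ ∩ Tᶜ) (T \ S) := by
        rw [Finset.disjoint_left]
        intro i hi hi2
        exact (Finset.mem_compl.mp (Finset.mem_inter.mp hi).2) (Finset.mem_sdiff.mp hi2).1
      have d2 : Disjoint (Sᶜ ∩ Tᶜ) (S \ T) := by
        rw [Finset.disjoint_left]
        intro i hi hi2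
        exact (Finset.mem_compl.mp (Finset.mem_inter.mp hi).1) (Finset.mem_sdiff.mp hi2).1
      have eS : ∑ i ∈ Sᶜ, (xbar i)^2 = ∑ i ∈ Sᶜ ∩ Tᶜ, (xbar i)^2 + ∑ i ∈ T \ S, (xbar i)^2 := by
        rw [← Finset.sum_union d1, ← hS]
      have eT : ∑ i ∈ Tᶜ, (xbar i)^2 = ∑ i ∈ Sᶜ ∩ Tᶜ, (xbar i)^2 + ∑ i ∈ S \ T, (xbar i)^2 := by
        rw [← Finset.sum_union d2, ← hTc]
      rw [eS, eT]
      exact add_le_add_right key2 _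
    -- norms
    have hn1 : ‖xhat - xbar‖ = Real.sqrt (∑ i, (xhat i - xbar i)^2) := by
      rw [EuclideanSpace.norm_eq]
      congr 1
      apply Finset.sum_congr rfl
      intro i _
      simp [Real.norm_eq_abs, sq_abs]
    have hn2 : ‖z - xbar‖ = Real.sqrt (∑ i, (z i - xbar i)^2) := by
      rw [EuclideanSpace.norm_eq]
      congr 1
      apply Finset.sum_congr rfl
      intro i _
      simp [Real.norm_eq_abs, sq_abs]
    rw [hn1, hn2]
    apply Real.sqrt_le_sqrt
    have e1 : ∑ i, (xhat i - xbar i)^2 = ∑ i ∈ Sᶜ, (xbar i)^2 := by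
      rw [← Finset.sum_compl_add_sum S (fun i => (xhat i - xbar i)^2)]
      have h0 : ∑ i ∈ S, (xhat i - xbar i)^2 = 0 := by
        apply Finset.sum_eq_zero
        intro i hi
        rw [hxhat]; simp [hi]
      rw [h0, add_zero]
      apply Finset.sum_congr rfl
      intro i hi
      rw [hxhat]
      simp only [Finset.mem_compl] at hi
      simp [hi]
    rw [e1]
    calc ∑ i ∈ Sᶜ, (xbar i)^2 ≤ ∑ i ∈ Tᶜ, (xbar i)^2 := key
      _ = ∑ i ∈ Tᶜ, (z i - xbar i)^2 := by
          apply Finset.sum_congr rfl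
          intro i hi
          rw [hzT i (Finset.mem_compl.mp hi)]
          ring
      _ ≤ ∑ i, (z i - xbar i)^2 := by
          rw [← Finset.sum_compl_add_sum T (fun i => (z i - xbar i)^2)]
          have : (0:ℝ) ≤ ∑ i ∈ T, (z i - xbar i)^2 := by positivity
          linarith
end
end

section
/- Let D = {(x,y) ∈ ℝⁿ × ℝⁿ : x_i y_i = 0 for all i, l_x ≤ x ≤ u_x, l_y ≤ y ≤ u_y} be a box-switching constraint set, where the componentwise bounds (allowed to be ±∞) satisfy l_x ≤ 0 ≤ u_x and l_y ≤ 0 ≤ u_y. Given (x̄, ȳ) ∈ ℝⁿ × ℝⁿ, let x̃ and ỹ be the componentwise projections of x̄ and ȳ onto the boxes [l_x, u_x] and [l_y, u_y] respectively (i.e., x̃_i = min{max{x̄_i, (l_x)_i}, (u_x)_i}, and analogously for ỹ), and define (x̂_i, ŷ_i) = (x̃_i, 0) if x̄_i² + (ỹ_i − ȳ_i)² ≥ (x̃_i − x̄_i)² + ȳ_i², and (x̂_i, ŷ_i) = (0, ỹ_i) otherwise. Then (x̂, ŷ) is a Euclidean projection of (x̄, ȳ) onto D; i.e., (x̂, ŷ)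 ∈ D and ‖(x̂, ŷ) − (x̄, ȳ)‖ ≤ ‖(x, y) − (x̄, ȳ)‖ for every (x,y) ∈ D. -/
lemma clamp_prop (l u : EReal) (hl : l ≤ 0) (hu : (0:EReal) ≤ u) (b : ℝ)
    (t : ℝ) (ht : t = (min (max (b:EReal) l) u).toReal) :
    l ≤ (t:EReal) ∧ (t:EReal) ≤ u ∧
      ∀ x : ℝ, l ≤ (x:EReal) → (x:EReal) ≤ u → (t - b)^2 ≤ (x - b)^2 := by
  set m : EReal := min (max (b:EReal) l) u with hm
  have hlu : l ≤ u := hl.trans hu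
  have hne_top : m ≠ ⊤ := by
    have h1 : m ≤ max (b:EReal) l := min_le_left _ _
    have h2 : max (b:EReal) l < ⊤ :=
      max_lt (lt_top_iff_ne_top.2 (EReal.coe_ne_top b)) (hl.trans_lt (by norm_num))
    exact (h1.trans_lt h2).ne
  have hne_bot : m ≠ ⊥ := by
    have h1 : (⊥:EReal) < max (b:EReal) l :=
      lt_max_of_lt_left (bot_lt_iff_ne_bot.2 (EReal.coe_ne_bot b))
    have h2 : (⊥:EReal) < u := lt_of_lt_of_le (by norm_num) hu
    exact (lt_min h1 h2).ne'
  have hcoe : ((t:EReal)) = m := by rw [ht]; exact EReal.coe_toReal hne_top hne_bot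
  refine ⟨?_, ?_, ?_⟩
  · rw [hcoe]; exact le_min (le_max_right _ _) hlu
  · rw [hcoe]; exact min_le_right _ _
  · intro x hxl hxu
    have hcmin : ((min b x : ℝ) : EReal) = min (b:EReal) (x:EReal) :=
      EReal.coe_strictMono.monotone.map_min
    have hcmax : ((max b x : ℝ) : EReal) = max (b:EReal) (x:EReal) :=
      EReal.coe_strictMono.monotone.map_max
    have hmin : (min b x : ℝ) ≤ t := by
      rw [← EReal.coe_le_coe_iff, hcoe, hcmin]
      exact le_min ((min_le_left _ _).trans (le_max_left _ _))
        ((min_le_right _ _).trans hxu)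
    have hmax : t ≤ (max b x : ℝ) := by
      rw [← EReal.coe_le_coe_iff, hcoe, hcmax]
      exact (min_le_left _ _).trans (max_le_max le_rfl hxl)
    rcases le_total b x with h | h
    · rw [min_eq_left h] at hmin; rw [max_eq_right h] at hmax; nlinarith
    · rw [min_eq_right h] at hmin; rw [max_eq_left h] at hmax; nlinarith

noncomputable section

/-- closed-form Euclidean projection onto the box-switching constraint set
`D = {(x,y) : x_i y_i = 0 ∀ i, l_x ≤ x ≤ u_x, l_y ≤ y ≤ u_y}` (bounds allowed to be
`±∞`, with `l_x ≤ 0 ≤ u_x` and `l_y ≤ 0 ≤ u_y`). -/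
theorem box_switching_projection
    {n : ℕ} (lx ux ly uy : Fin n → EReal)
    (hbox : ∀ i, lx i ≤ 0 ∧ (0 : EReal) ≤ ux i ∧ ly i ≤ 0 ∧ (0 : EReal) ≤ uy i)
    (xbar ybar : Fin n → ℝ)
    (xt yt : Fin n → ℝ)
    (hxt : ∀ i, xt i = (min (max (xbar i : EReal) (lx i)) (ux i)).toReal)
    (hyt : ∀ i, yt i = (min (max (ybar i : EReal) (ly i)) (uy i)).toReal)
    (xhat yhat : Fin n → ℝ)
    (hhat : ∀ i,
      ((xt i - xbar i) ^ 2 + ybar i ^ 2 ≤ xbar i ^ 2 + (yt i - ybar i) ^ 2 →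
        xhat i = xt i ∧ yhat i = 0) ∧
      (¬ ((xt i - xbar i) ^ 2 + ybar i ^ 2 ≤ xbar i ^ 2 + (yt i - ybar i) ^ 2) →
        xhat i = 0 ∧ yhat i = yt i)) :
    (∀ i, xhat i * yhat i = 0 ∧
        lx i ≤ (xhat i : EReal) ∧ (xhat i : EReal) ≤ ux i ∧
        ly i ≤ (yhat i : EReal) ∧ (yhat i : EReal) ≤ uy i) ∧
      ∀ x y : Fin n → ℝ,
        (∀ i, x i * y i = 0 ∧
          lx i ≤ (x i : EReal) ∧ (x i : EReal) ≤ ux i ∧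
          ly i ≤ (y i : EReal) ∧ (y i : EReal) ≤ uy i) →
        Real.sqrt (∑ i, (xhat i - xbar i) ^ 2 + ∑ i, (yhat i - ybar i) ^ 2) ≤
          Real.sqrt (∑ i, (x i - xbar i) ^ 2 + ∑ i, (y i - ybar i) ^ 2) := by
  have hX := fun i => clamp_prop (lx i) (ux i) (hbox i).1 (hbox i).2.1 (xbar i) (xt i) (hxt i)
  have hY := fun i => clamp_prop (ly i) (uy i) (hbox i).2.2.1 (hbox i).2.2.2 (ybar i) (yt i) (hyt i)
  constructor
  · intro i
    rcases le_or_gt ((xt i - xbar i) ^ 2 + ybar i ^ 2) (xbar i ^ 2 + (yt i - ybar i) ^ 2) with hc | hc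
    · obtain ⟨h1, h2⟩ := (hhat i).1 hc
      rw [h1, h2]
      exact ⟨by ring, (hX i).1, (hX i).2.1, by exact_mod_cast (hbox i).2.2.1,
        by exact_mod_cast (hbox i).2.2.2⟩
    · obtain ⟨h1, h2⟩ := (hhat i).2 (not_le.2 hc)
      rw [h1, h2]
      exact ⟨by ring, by exact_mod_cast (hbox i).1, by exact_mod_cast (hbox i).2.1,
        (hY i).1, (hY i).2.1⟩
  · intro x y hf
    apply Real.sqrt_le_sqrt
    have key : ∀ i, (xhat i - xbar i) ^ 2 + (yhat i - ybar i) ^ 2 ≤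
        (x i - xbar i) ^ 2 + (y i - ybar i) ^ 2 := by
      intro i
      obtain ⟨hxy, hxl, hxu, hyl, hyu⟩ := hf i
      have hxp : (xt i - xbar i)^2 ≤ (x i - xbar i)^2 := (hX i).2.2 (x i) hxl hxu
      have hyp : (yt i - ybar i)^2 ≤ (y i - ybar i)^2 := (hY i).2.2 (y i) hyl hyu
      have lhs_le : (xhat i - xbar i) ^ 2 + (yhat i - ybar i) ^ 2 ≤
          min ((xt i - xbar i) ^ 2 + ybar i ^ 2) (xbar i ^ 2 + (yt i - ybar i) ^ 2) := by
        rcases le_or_gt ((xt i - xbar i) ^ 2 + ybar i ^ 2) (xbar i ^ 2 + (yt i - ybar i) ^ 2) with hc | hc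
        · obtain ⟨h1, h2⟩ := (hhat i).1 hc
          rw [h1, h2, min_eq_left hc]; ring_nf; rfl
        · obtain ⟨h1, h2⟩ := (hhat i).2 (not_le.2 hc)
          rw [h1, h2, min_eq_right hc.le]; ring_nf; rfl
      rcases mul_eq_zero.1 hxy with hx0 | hy0
      · calc (xhat i - xbar i) ^ 2 + (yhat i - ybar i) ^ 2
            ≤ xbar i ^ 2 + (yt i - ybar i) ^ 2 := lhs_le.trans (min_le_right _ _)
          _ ≤ (x i - xbar i) ^ 2 + (y i - ybar i) ^ 2 := by rw [hx0]; nlinarith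
      · calc (xhat i - xbar i) ^ 2 + (yhat i - ybar i) ^ 2
            ≤ (xt i - xbar i) ^ 2 + ybar i ^ 2 := lhs_le.trans (min_le_left _ _)
          _ ≤ (x i - xbar i) ^ 2 + (y i - ybar i) ^ 2 := by rw [hy0]; nlinarith
    calc ∑ i, (xhat i - xbar i) ^ 2 + ∑ i, (yhat i - ybar i) ^ 2
        = ∑ i, ((xhat i - xbar i) ^ 2 + (yhat i - ybar i) ^ 2) := (Finset.sum_add_distrib).symm
      _ ≤ ∑ i, ((x i - xbar i) ^ 2 + (y i - ybar i) ^ 2) := Finset.sum_le_sum fun i _ => key i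
      _ = ∑ i, (x i - xbar i) ^ 2 + ∑ i, (y i - ybar i) ^ 2 := Finset.sum_add_distrib
end
end
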